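/- Let (X,ρ) be a quasi-metric space, let D be a system of dyadic cubes with parameters δ ∈ (0,1), 0 < c₁ ≤ C₁ < ∞ possessing the distinguished center point property, and let μ be a positive Borel measure on X with μ(B) < ∞ for every ball B ⊆ X and μ(X) = ∞. Fix 1 < p < ∞ and f ∈ L^p(X,μ). Then for every x ∈ X, the averages of f over the cubes containing x tend to zero along decreasing generations: μ(Q^m(x))^{-1} ∫_{Q^m(x)} f dμ → 0 as m → −∞ (for all m such that μ(Q^m(x)) > 0, which holds for all sufficiently negative m, and indeed μ(Q^m(x)) → ∞ as m → −∞). -/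

import Mathlib

open MeasureTheory Set
open scoped ENNReal

universe u

/-- A quasi-metric on `X` with quasi-triangle constant `A₀`. -/
structure IsQuasiMetric {X : Type u} (ρ : X → X → ℝ) (A₀ : ℝ) : Prop where
  one_le : 1 ≤ A₀
  nonneg : ∀ x y, 0 ≤ ρ x y
  symm : ∀ x y, ρ x y = ρ y x
  eq_zero_iff : ∀ x y, ρ x y = 0 ↔ x = y
  triangle : ∀ x y z, ρ x y ≤ A₀ * (ρ x z + ρ z y)

/-- The quasi-metric ball `B(x,r)`. -/
def qball {X : Type u} (ρ : X → X → ℝ) (x : X) (r : ℝ) : Set X := {y | ρ x y < r}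

/-- A system of dyadic cubes on `(X,ρ)` with parameters `δ ∈ (0,1)`, `0 < c₁ ≤ C₁ < ∞`. -/
structure DyadicSystem (X : Type u) [MeasurableSpace X] (ρ : X → X → ℝ)
    (δ c₁ C₁ : ℝ) where
  idx : ℤ → Set (Set X)
  center : ℤ → Set X → X
  countable : ∀ k, (idx k).Countable
  measurableSet : ∀ k, ∀ Q ∈ idx k, MeasurableSet Q
  cover : ∀ k, ⋃₀ idx k = Set.univ
  pairwiseDisjoint : ∀ k, ∀ Q ∈ idx k, ∀ Q' ∈ idx k, Q ≠ Q' → Disjoint Q Q'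
  nested : ∀ k ℓ : ℤ, k ≤ ℓ → ∀ Q ∈ idx k, ∀ R ∈ idx ℓ, R ⊆ Q ∨ Disjoint R Q
  nchild : ℕ
  children_card : ∀ k, ∀ Q ∈ idx k,
    1 ≤ {R | R ∈ idx (k + 1) ∧ R ⊆ Q}.ncard ∧ {R | R ∈ idx (k + 1) ∧ R ⊆ Q}.ncard ≤ nchild
  children_union : ∀ k, ∀ Q ∈ idx k, Q = ⋃₀ {R | R ∈ idx (k + 1) ∧ R ⊆ Q}
  center_mem : ∀ k, ∀ Q ∈ idx k, center k Q ∈ Q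
  ball_subset : ∀ k, ∀ Q ∈ idx k, qball ρ (center k Q) (c₁ * δ ^ k) ⊆ Q
  subset_ball : ∀ k, ∀ Q ∈ idx k, Q ⊆ qball ρ (center k Q) (C₁ * δ ^ k)

/-- `D` has the distinguished center point property with distinguished point `x₀`. -/
def DyadicSystem.DistinguishedPoint {X : Type u} [MeasurableSpace X] {ρ : X → X → ℝ}
    {δ c₁ C₁ : ℝ} (D : DyadicSystem X ρ δ c₁ C₁) (x₀ : X) : Prop :=
  ∀ k : ℤ, ∃ Q ∈ D.idx k, D.center k Q = x₀

/-- The doubling condition for a Borel measure on a quasi-metric space. -/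
def IsDoublingMeasure {X : Type u} [MeasurableSpace X] (ρ : X → X → ℝ)
    (μ : Measure X) (Cμ : ℝ≥0∞) : Prop :=
  ∀ (x : X) (r : ℝ), 0 < r →
    0 < μ (qball ρ x (2 * r)) ∧
    μ (qball ρ x (2 * r)) ≤ Cμ * μ (qball ρ x r) ∧
    μ (qball ρ x r) < ⊤

/-- A collection of adjacent systems of dyadic cubes with comparability constant `C`. -/
def AdjacentSystems {X : Type u} [MeasurableSpace X] (ρ : X → X → ℝ)
    {δ c₁ C₁ : ℝ} {T : ℕ} (D : Fin T → DyadicSystem X ρ δ c₁ C₁) (C : ℝ) : Prop :=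
  ∀ (x : X) (r : ℝ) (k : ℤ), δ ^ (k + 3) < r → r ≤ δ ^ (k + 2) →
    ∃ t : Fin T, ∃ Q ∈ (D t).idx k, qball ρ x r ⊆ Q ∧ Q ⊆ qball ρ x (C * r)

/-- Let `D` be a system of dyadic cubes with the distinguished center
point property on a quasi-metric space, and let `μ` be a positive Borel measure that is
finite on balls with `μ(X) = ∞`. For `1 < p < ∞` and `f ∈ L^p(X,μ)`, for every `x`
the measures `μ(Q^m(x))` tend to `∞` as `m → −∞` (so in particular are positive for
all sufficiently negative `m`), and the averages of `f` over `Q^m(x)` tend to `0` as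
`m → −∞`. -/
theorem statement19 {X : Type u} [MeasurableSpace X] (ρ : X → X → ℝ) (A₀ : ℝ)
    (hρ : IsQuasiMetric ρ A₀) (δ c₁ C₁ : ℝ) (hδ0 : 0 < δ) (hδ1 : δ < 1)
    (hc₁ : 0 < c₁) (hc₁C₁ : c₁ ≤ C₁)
    (D : DyadicSystem X ρ δ c₁ C₁) (x₀ : X) (hx₀ : D.DistinguishedPoint x₀)
    (μ : Measure X) (hballfin : ∀ (x : X) (r : ℝ), 0 < r → μ (qball ρ x r) < ⊤)
    (hXinf : μ Set.univ = ⊤)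
    (p : ℝ) (hp : 1 < p) (f : X → ℝ) (hf : MemLp f (ENNReal.ofReal p) μ) :
    ∀ x : X,
      (∀ N : ℝ, ∃ m₀ : ℤ, ∀ m ≤ m₀, ∀ Q ∈ D.idx m, x ∈ Q → ENNReal.ofReal N < μ Q) ∧
      (∀ ε : ℝ, 0 < ε → ∃ m₀ : ℤ, ∀ m ≤ m₀, ∀ Q ∈ D.idx m, x ∈ Q →
        |(μ Q).toReal⁻¹ * ∫ y in Q, f y ∂μ| < ε) := by
  intro x
  have hδi : 1 < δ⁻¹ := (one_lt_inv₀ hδ0).mpr hδ1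
  have hC₁ : 0 < C₁ := lt_of_lt_of_le hc₁ hc₁C₁
  have key : ∀ N : ℝ, ∃ m₀ : ℤ, ∀ m ≤ m₀, ∀ Q ∈ D.idx m, x ∈ Q → ENNReal.ofReal N < μ Q := by
    intro N
    -- find a big ball around x₀ with big measure
    obtain ⟨n, hn⟩ : ∃ n : ℕ, ENNReal.ofReal N < μ (qball ρ x₀ n) := by
      have hmono : Monotone (fun n : ℕ => qball ρ x₀ n) := by
        intro a b hab y hy
        have hy' : ρ x₀ y < (a:ℝ) := hy
        exact lt_of_lt_of_le hy' (by exact_mod_cast hab)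
      have hcov : ⋃ n : ℕ, qball ρ x₀ n = Set.univ := by
        ext y; simp only [Set.mem_iUnion, Set.mem_univ, iff_true]
        obtain ⟨n, hn⟩ := exists_nat_gt (ρ x₀ y)
        exact ⟨n, hn⟩
      have hsup : μ (⋃ n : ℕ, qball ρ x₀ n) = ⨆ n : ℕ, μ (qball ρ x₀ n) :=
        (hmono.directed_le).measure_iUnion
      rw [hcov, hXinf] at hsup
      have : ENNReal.ofReal N < ⨆ n : ℕ, μ (qball ρ x₀ n) := by
        rw [← hsup]; exact ENNReal.ofReal_lt_top
      exact lt_iSup_iff.mp this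
    -- choose m₀ with c₁ * δ ^ m₀ > max n (ρ x₀ x)
    set R : ℝ := max (n : ℝ) (ρ x₀ x) with hR
    obtain ⟨k, hk⟩ := pow_unbounded_of_one_lt (R / c₁) hδi
    refine ⟨-(k : ℤ), fun m hm Q hQ hxQ => ?_⟩
    have hRlt : R < c₁ * δ ^ m := by
      have h1 : (δ:ℝ) ^ (-(k:ℤ)) ≤ δ ^ m := zpow_le_zpow_right_of_le_one₀ hδ0 hδ1.le hm
      have h2 : (δ:ℝ) ^ (-(k:ℤ)) = δ⁻¹ ^ k := by
        rw [zpow_neg, ← inv_zpow, zpow_natCast]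
      have h3 : R / c₁ < δ ^ m := lt_of_lt_of_le (h2 ▸ hk) h1
      calc R = c₁ * (R / c₁) := by field_simp
        _ < c₁ * δ ^ m := mul_lt_mul_of_pos_left h3 hc₁
    obtain ⟨Q₀, hQ₀, hcen⟩ := hx₀ m
    have hxQ₀ : x ∈ Q₀ := by
      apply D.ball_subset m Q₀ hQ₀
      show ρ (D.center m Q₀) x < c₁ * δ ^ m
      rw [hcen]
      exact lt_of_le_of_lt (le_max_right _ _) hRlt
    have hQeq : Q = Q₀ := by
      by_contra h
      exact Set.disjoint_left.mp (D.pairwiseDisjoint m Q hQ Q₀ hQ₀ h) hxQ hxQ₀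
    have hball : qball ρ x₀ n ⊆ Q := by
      rw [hQeq]
      intro y hy
      apply D.ball_subset m Q₀ hQ₀
      show ρ (D.center m Q₀) y < c₁ * δ ^ m
      rw [hcen]
      exact lt_of_lt_of_le hy (le_of_lt (lt_of_le_of_lt (le_max_left _ _) hRlt))
    exact lt_of_lt_of_le hn (measure_mono hball)
  refine ⟨key, fun ε hε => ?_⟩
  set P : ℝ≥0∞ := ENNReal.ofReal p with hP
  have hp0 : (0:ℝ) < p := lt_trans one_pos hp
  have hP1 : (1:ℝ≥0∞) ≤ P := by
    rw [hP, ← ENNReal.ofReal_one]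
    exact ENNReal.ofReal_le_ofReal hp.le
  have hPtop : P ≠ ⊤ := ENNReal.ofReal_ne_top
  have hPto : P.toReal = p := ENNReal.toReal_ofReal hp0.le
  set K : ℝ := (eLpNorm f P μ).toReal with hK
  have hK0 : 0 ≤ K := ENNReal.toReal_nonneg
  set N : ℝ := max 1 ((K / ε + 1) ^ p) with hN
  obtain ⟨m₀, hm₀⟩ := key N
  refine ⟨m₀, fun m hm Q hQ hxQ => ?_⟩
  have hμQ := hm₀ m hm Q hQ hxQ
  have hN1 : (1:ℝ) ≤ N := le_max_left _ _
  have hμQtop : μ Q < ⊤ := by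
    refine lt_of_le_of_lt (measure_mono (D.subset_ball m Q hQ)) ?_
    exact hballfin _ _ (mul_pos hC₁ (zpow_pos hδ0 m))
  set t : ℝ := (μ Q).toReal with ht
  have htN : N < t := by
    rw [ht]
    exact (ENNReal.ofReal_lt_iff_lt_toReal (le_trans zero_le_one hN1) hμQtop.ne).mp hμQ
  have ht1 : (1:ℝ) < t := lt_of_le_of_lt hN1 htN
  have ht0 : (0:ℝ) < t := lt_trans one_pos ht1
  -- integrability on Q
  have hfr : MemLp f P (μ.restrict Q) := hf.restrict Q
  haveI : IsFiniteMeasure (μ.restrict Q) := by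
    constructor
    rw [Measure.restrict_apply_univ]
    exact hμQtop
  have hint : Integrable f (μ.restrict Q) := hfr.integrable hP1
  -- Hölder bound
  have hHolder : eLpNorm f 1 (μ.restrict Q) ≤
      eLpNorm f P μ * (μ Q) ^ (1 - 1 / p) := by
    have h := eLpNorm_le_eLpNorm_mul_rpow_measure_univ (μ := μ.restrict Q) hP1
      hfr.aestronglyMeasurable
    rw [Measure.restrict_apply_univ] at h
    have hexp : 1 / (1:ℝ≥0∞).toReal - 1 / P.toReal = 1 - 1 / p := by
      rw [hPto]; norm_num
    rw [hexp] at h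
    refine le_trans h ?_
    gcongr
    exact Measure.restrict_le_self
  have hexp0 : (0:ℝ) ≤ 1 - 1 / p := by
    have : 1 / p < 1 := by
      rw [div_lt_one hp0]; exact hp
    linarith
  have hrhs_top : eLpNorm f P μ * (μ Q) ^ (1 - 1 / p) ≠ ⊤ :=
    (ENNReal.mul_lt_top hf.2 (ENNReal.rpow_lt_top_of_nonneg hexp0 hμQtop.ne)).ne
  have hbound : ∫ y in Q, ‖f y‖ ∂μ ≤ K * t ^ (1 - 1 / p) := by
    have h1 : ∫ y in Q, ‖f y‖ ∂μ = (eLpNorm f 1 (μ.restrict Q)).toReal := by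
      rw [integral_norm_eq_lintegral_enorm hfr.aestronglyMeasurable,
        eLpNorm_one_eq_lintegral_enorm]
    rw [h1]
    refine le_trans (ENNReal.toReal_mono hrhs_top hHolder) ?_
    rw [ENNReal.toReal_mul, ← ENNReal.toReal_rpow]
  have habs : |(μ Q).toReal⁻¹ * ∫ y in Q, f y ∂μ| ≤ t⁻¹ * (K * t ^ (1 - 1 / p)) := by
    rw [abs_mul, abs_inv, abs_of_pos ht0]
    refine mul_le_mul_of_nonneg_left ?_ (inv_nonneg.mpr ht0.le)
    calc |∫ y in Q, f y ∂μ| ≤ ∫ y in Q, ‖f y‖ ∂μ := norm_integral_le_integral_norm f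
      _ ≤ K * t ^ (1 - 1 / p) := hbound
  refine lt_of_le_of_lt habs ?_
  have hsimp : t⁻¹ * (K * t ^ (1 - 1 / p)) = K / t ^ (1 / p) := by
    rw [show (1:ℝ) - 1 / p = -(1/p) + 1 by ring, Real.rpow_add ht0, Real.rpow_one,
      Real.rpow_neg ht0.le, div_eq_mul_inv]
    field_simp
  rw [hsimp]
  have hKε : (0:ℝ) < K / ε + 1 := by positivity
  have htp : K / ε + 1 < t ^ (1 / p) := by
    have h1 : ((K / ε + 1) ^ p) ^ (1 / p) < t ^ (1 / p) := by
      refine Real.rpow_lt_rpow (by positivity) ?_ (by positivity)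
      exact lt_of_le_of_lt (le_max_right _ _) htN
    have h2 : ((K / ε + 1) ^ p) ^ (1 / p) = K / ε + 1 := by
      rw [← Real.rpow_mul hKε.le, mul_one_div, div_self hp0.ne', Real.rpow_one]
    rwa [h2] at h1
  have htp' : (0:ℝ) < t ^ (1 / p) := by positivity
  rw [div_lt_iff₀ htp']
  have : ε * (K / ε + 1) = K + ε := by field_simp
  calc K < K + ε := by linarith
    _ = ε * (K / ε + 1) := this.symm
    _ ≤ ε * t ^ (1 / p) := by nlinarith [htp]
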